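/- Let n > 1 be an integer, F and G division rings, and φ : F → Mₙ(G) a tight ring embedding. Let ν : G → F be the induced embedding (ν(g) is the unique element of F whose image under φ has first row (g, 0, …, 0)) and let f_0 = 1, f_1, …, f_{n−1} ∈ F be the elements whose images under φ have as first rows the standard basis rows, so that {f_0, …, f_{n−1}} is a left ν(G)-basis of F. Then, with L_k, S_k, D_k defined with respect to the subring ν(G) and this basis, for every 0 ≤ k < n−1 there exists e ∈ D_k with e ∉ S_k such that every d ∈ D_k can be written d = s + e·t with s, t ∈ S_k (i.e., {1, e} is a basis of D_k as a right S_k-vector space, so D_k has right dimension 2 over S_k). -/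
import Mathlib


/-- `φ : F → Mₙ(α)` is `a`-tight: every possible upper-right `a × (n+1-a)` block
(rows `1,…,a`, columns `a,…,n`, one-indexed) is realized by some element of `F`. -/
def ATight {n : ℕ} {F α : Type*} (φ : F → Matrix (Fin n) (Fin n) α) (a : ℕ) : Prop :=
  ∀ g : Matrix (Fin n) (Fin n) α, ∃ x : F, ∀ i j : Fin n,
    (i : ℕ) < a → a ≤ (j : ℕ) + 1 → φ x i j = g i j

/-- `L_k`: the left `ν(G)`-subspace of `F` spanned by `f_0, …, f_k`. -/
def LsetR {F G : Type*} [DivisionRing F] [DivisionRing G] (ν : G → F) (f : ℕ → F)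
    (k : ℕ) : Set F :=
  {x | ∃ c : ℕ → G, x = ∑ i ∈ Finset.range (k + 1), ν (c i) * f i}

/-- `S_k = {a ∈ F : L_k · a ⊆ L_k}`. -/
def SsetR {F G : Type*} [DivisionRing F] [DivisionRing G] (ν : G → F) (f : ℕ → F)
    (k : ℕ) : Set F :=
  {a | ∀ x ∈ LsetR ν f k, x * a ∈ LsetR ν f k}

/-- `D_0 = F`, and `D_k = {a ∈ F : L_{k-1} · a ⊆ L_k}` for `k ≥ 1`. -/
def DsetR {F G : Type*} [DivisionRing F] [DivisionRing G] (ν : G → F) (f : ℕ → F) :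
    ℕ → Set F
  | 0 => Set.univ
  | k + 1 => {a | ∀ x ∈ LsetR ν f k, x * a ∈ LsetR ν f (k + 1)}

theorem stmt2 {F G : Type*} [DivisionRing F] [DivisionRing G] (n : ℕ) (hn : 1 < n)
    (φ : F →+* Matrix (Fin n) (Fin n) G) (hinj : Function.Injective φ)
    (htight : ∀ a : ℕ, 1 ≤ a → a ≤ n → ATight (⇑φ) a)
    -- `ν` is the induced embedding: `ν g` is the element whose image has first row `(g,0,…,0)`
    (ν : G → F)
    (hν : ∀ (g : G) (j : Fin n),
      φ (ν g) ⟨0, by omega⟩ j = if (j : ℕ) = 0 then g else 0)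
    -- the elements `f_0 = 1, f_1, …, f_{n-1}` whose images have the standard basis first rows
    (f : ℕ → F) (hf0 : f 0 = 1)
    (hf : ∀ i j : Fin n,
      φ (f (i : ℕ)) ⟨0, by omega⟩ j = if (j : ℕ) = (i : ℕ) then 1 else 0)
    -- so that `{f_0, …, f_{n-1}}` is a left `ν(G)`-basis of `F`
    (hspan : ∀ x : F, ∃ c : ℕ → G, x = ∑ i ∈ Finset.range n, ν (c i) * f i)
    (hindep : ∀ c : ℕ → G, ∑ i ∈ Finset.range n, ν (c i) * f i = 0 → ∀ i < n, c i = 0) :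
    ∀ k < n - 1, ∃ e ∈ DsetR ν f k, e ∉ SsetR ν f k ∧
      ∀ d ∈ DsetR ν f k, ∃ s ∈ SsetR ν f k, ∃ t ∈ SsetR ν f k, d = s + e * t := by
  have hn0 : 0 < n := by omega
  have hν' : ∀ (g : G) (j : Fin n), φ (ν g) ⟨0, hn0⟩ j = if (j : ℕ) = 0 then g else 0 :=
    fun g j => hν g j
  -- row-0 of a spanning sum
  have hrow : ∀ (c : ℕ → G) (m : ℕ), m ≤ n → ∀ j : Fin n,
      φ (∑ i ∈ Finset.range m, ν (c i) * f i) ⟨0, hn0⟩ j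
        = if (j : ℕ) < m then c (j : ℕ) else 0 := by
    intro c m hm j
    rw [map_sum, Matrix.sum_apply]
    have hterm : ∀ i ∈ Finset.range m,
        φ (ν (c i) * f i) ⟨0, hn0⟩ j = if (j : ℕ) = i then c i else 0 := by
      intro i hi
      have hi' : i < n := lt_of_lt_of_le (Finset.mem_range.mp hi) hm
      rw [map_mul, Matrix.mul_apply, Finset.sum_eq_single (⟨0, hn0⟩ : Fin n)]
      · have h2 := hf ⟨i, hi'⟩ j
        simp only [Fin.val_mk] at h2
        rw [hν', h2]
        simp only [Fin.val_mk, if_pos rfl]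
        by_cases hji : (j : ℕ) = i <;> simp [hji]
      · intro b _ hb
        have hbv : (b : ℕ) ≠ 0 := fun hh => hb (Fin.ext hh)
        rw [hν', if_neg hbv, zero_mul]
      · simp
    rw [Finset.sum_congr rfl hterm, Finset.sum_ite_eq (Finset.range m) ((j : ℕ)) c]
    simp [Finset.mem_range]
  -- injectivity of the first row
  have hrowinj : ∀ x y : F, (∀ j : Fin n, φ x ⟨0, hn0⟩ j = φ y ⟨0, hn0⟩ j) → x = y := by
    intro x y h
    obtain ⟨a, hx⟩ := hspan x
    obtain ⟨b, hy⟩ := hspan y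
    rw [hx, hy]
    refine Finset.sum_congr rfl fun i hi => ?_
    have hi' : i < n := Finset.mem_range.mp hi
    have h1 := hrow a n le_rfl ⟨i, hi'⟩
    have h2 := hrow b n le_rfl ⟨i, hi'⟩
    rw [← hx] at h1; rw [← hy] at h2
    have h3 := h ⟨i, hi'⟩
    rw [h1, h2] at h3
    simp only [Fin.val_mk, if_pos hi'] at h3
    rw [h3]
  -- membership in L_m via vanishing of the first row past m
  have hLmem : ∀ (m : ℕ), m < n → ∀ x : F,
      x ∈ LsetR ν f m ↔ ∀ j : Fin n, m < (j : ℕ) → φ x ⟨0, hn0⟩ j = 0 := by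
    intro m hm x
    constructor
    · rintro ⟨c, rfl⟩ j hj
      rw [hrow c (m + 1) (by omega) j, if_neg (by omega)]
    · intro h
      obtain ⟨a, hx⟩ := hspan x
      refine ⟨a, hrowinj _ _ fun j => ?_⟩
      rw [hrow a (m + 1) (by omega) j]
      by_cases hj : (j : ℕ) < m + 1
      · rw [if_pos hj]
        have h1 := hrow a n le_rfl j
        rw [← hx, if_pos j.isLt] at h1
        exact h1
      · rw [if_neg hj]
        exact h j (by omega)
  -- forward block-vanishing
  have hfwd : ∀ (a : F) (m₁ m₂ : ℕ), m₁ < n → m₂ < n →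
      (∀ x ∈ LsetR ν f m₁, x * a ∈ LsetR ν f m₂) →
      ∀ i j : Fin n, (i : ℕ) ≤ m₁ → m₂ < (j : ℕ) → φ a i j = 0 := by
    intro a m₁ m₂ hm₁ hm₂ h i j hi hj
    set c : ℕ → G := fun l => if l = (i : ℕ) then 1 else 0 with hc
    have hx : (∑ l ∈ Finset.range (m₁ + 1), ν (c l) * f l) ∈ LsetR ν f m₁ := ⟨c, rfl⟩
    have h2 := (hLmem m₂ hm₂ _).mp (h _ hx) j hj
    rw [map_mul, Matrix.mul_apply] at h2
    rw [Finset.sum_eq_single i ?_ ?_] at h2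
    · rw [hrow c (m₁ + 1) (by omega) i, if_pos (by omega)] at h2
      simpa [hc] using h2
    · intro b _ hb
      have hbv : (b : ℕ) ≠ (i : ℕ) := fun hh => hb (Fin.ext hh)
      rw [hrow c (m₁ + 1) (by omega) b]
      simp [hc, hbv]
    · simp
  -- backward for S
  have hSback : ∀ (a : F) (m : ℕ), m < n →
      (∀ i j : Fin n, (i : ℕ) ≤ m → m < (j : ℕ) → φ a i j = 0) →
      a ∈ SsetR ν f m := by
    intro a m hm ha x hxL
    rw [hLmem m hm]
    intro j hj
    rw [map_mul, Matrix.mul_apply]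
    refine Finset.sum_eq_zero fun l _ => ?_
    by_cases hl : (l : ℕ) ≤ m
    · rw [ha l j hl hj, mul_zero]
    · rw [(hLmem m hm x).mp hxL l (by omega), zero_mul]
  intro k hk
  have hkn : k + 1 < n := by omega
  -- construct e
  obtain ⟨e, he⟩ := htight (k + 1) (by omega) (by omega)
    (Matrix.of fun i j => if (i : ℕ) = k ∧ (j : ℕ) = k + 1 then (1 : G) else 0)
  have he' : ∀ i j : Fin n, (i : ℕ) ≤ k → k ≤ (j : ℕ) →
      φ e i j = if (i : ℕ) = k ∧ (j : ℕ) = k + 1 then 1 else 0 :=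
    fun i j hi hj => he i j (by omega) (by omega)
  have heD : e ∈ DsetR ν f k := by
    cases k with
    | zero => exact Set.mem_univ e
    | succ k' =>
      intro x hx
      rw [hLmem (k' + 1) (by omega)]
      intro j hj
      rw [map_mul, Matrix.mul_apply]
      refine Finset.sum_eq_zero fun l _ => ?_
      by_cases hl : (l : ℕ) ≤ k'
      · rw [he' l j (by omega) (by omega), if_neg (by omega), mul_zero]
      · rw [(hLmem k' (by omega) x).mp hx l (by omega), zero_mul]
  have heS : e ∉ SsetR ν f k := by
    intro hs
    have h1 := hfwd e k k (by omega) (by omega) hs ⟨k, by omega⟩ ⟨k + 1, hkn⟩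
      le_rfl (Nat.lt_succ_self k)
    have h2 := he' ⟨k, by omega⟩ ⟨k + 1, hkn⟩ le_rfl (Nat.le_succ k)
    rw [h1] at h2
    simp at h2
  refine ⟨e, heD, heS, fun d hd => ?_⟩
  obtain ⟨t, ht⟩ := htight (k + 2) (by omega) (by omega)
    (Matrix.of fun i j => if (i : ℕ) = k + 1 then φ d ⟨k, by omega⟩ j else 0)
  have ht' : ∀ i j : Fin n, (i : ℕ) ≤ k + 1 → k + 1 ≤ (j : ℕ) →
      φ t i j = if (i : ℕ) = k + 1 then φ d ⟨k, by omega⟩ j else 0 :=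
    fun i j hi hj => ht i j (by omega) (by omega)
  have htS : t ∈ SsetR ν f k := hSback t k (by omega) fun i j hi hj => by
    rw [ht' i j (by omega) (by omega), if_neg (by omega)]
  have hd' : ∀ i j : Fin n, (i : ℕ) < k → k < (j : ℕ) → φ d i j = 0 := by
    cases k with
    | zero => intro i j hi hj; omega
    | succ k' =>
      intro i j hi hj
      exact hfwd d k' (k' + 1) (by omega) (by omega) hd i j (by omega) hj
  have het : ∀ i j : Fin n, (i : ℕ) ≤ k → k < (j : ℕ) →
      φ (e * t) i j = if (i : ℕ) = k then φ d ⟨k, by omega⟩ j else 0 := by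
    intro i j hi hj
    rw [map_mul, Matrix.mul_apply]
    rw [Finset.sum_eq_single (⟨k + 1, hkn⟩ : Fin n) ?_ ?_]
    · rw [he' i ⟨k + 1, hkn⟩ hi (Nat.le_succ k),
        ht' ⟨k + 1, hkn⟩ j le_rfl (by omega)]
      by_cases hik : (i : ℕ) = k
      · simp [hik]
      · simp [hik]
    · intro b _ hb
      by_cases hbk : (b : ℕ) ≤ k
      · rw [ht' b j (by omega) (by omega), if_neg (by omega), mul_zero]
      · rw [he' i b hi (by omega), if_neg ?_, zero_mul]
        rintro ⟨-, hb2⟩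
        exact hb (Fin.ext hb2)
    · simp
  have hsS : d - e * t ∈ SsetR ν f k := hSback _ k (by omega) fun i j hi hj => by
    rw [map_sub, Matrix.sub_apply, het i j hi hj]
    by_cases hik : (i : ℕ) = k
    · rw [if_pos hik]
      have hcongr : φ d i j = φ d ⟨k, by omega⟩ j :=
        congrFun (congrArg (φ d) (Fin.ext hik)) j
      rw [hcongr, sub_self]
    · rw [if_neg hik, hd' i j (by omega) hj, sub_zero]
  exact ⟨d - e * t, hsS, t, htS, by abel⟩
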